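/- For gradient descent with inexact gradient of absolute error Δ on an L-smooth function, after N steps min_{0≤k≤N-1} ‖∇f(x^k)‖ ≤ Δ + √(2L(f(x^0) - f*)/N). -/

import Mathlib

open Real

variable {E : Type*} [NormedAddCommGroup E] [InnerProductSpace ℝ E] [CompleteSpace E]

/-- Descent lemma. -/
lemma descent_lemma (f : E → ℝ) (g : E → E) (L : ℝ) (hL : 0 < L)
    (hgrad : ∀ x, HasGradientAt f (g x) x)
    (hLip : ∀ x y, ‖g x - g y‖ ≤ L * ‖x - y‖) (x y : E) :
    f y ≤ f x + inner ℝ (g x) (y - x) + L / 2 * ‖y - x‖ ^ 2 := by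
  set v := y - x with hv
  set ψ : ℝ → ℝ := fun t => f (x + t • v) - t * inner ℝ (g x) v - L / 2 * t ^ 2 * ‖v‖ ^ 2 with hψ
  have hc : ∀ t : ℝ, HasDerivAt (fun s : ℝ => x + s • v) v t := by
    intro t
    simpa using ((hasDerivAt_id t).smul_const v).const_add x
  have hψ' : ∀ t : ℝ, HasDerivAt ψ
      ((inner ℝ (g (x + t • v)) v : ℝ) - inner ℝ (g x) v - L * t * ‖v‖ ^ 2) t := by
    intro t
    have h1 : HasDerivAt (fun s : ℝ => f (x + s • v)) (inner ℝ (g (x + t • v)) v : ℝ) t := by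
      have hf := (hasGradientAt_iff_hasFDerivAt.1 (hgrad (x + t • v)))
      have := hf.comp_hasDerivAt t (hc t)
      simp [InnerProductSpace.toDual_apply_apply] at this
      exact this
    have h2 : HasDerivAt (fun s : ℝ => s * inner ℝ (g x) v) (inner ℝ (g x) v : ℝ) t := by
      simpa using (hasDerivAt_id t).mul_const (inner ℝ (g x) v : ℝ)
    have h3 : HasDerivAt (fun s : ℝ => L / 2 * s ^ 2 * ‖v‖ ^ 2) (L * t * ‖v‖ ^ 2) t := by
      have := ((hasDerivAt_pow 2 t).const_mul (L / 2)).mul_const (‖v‖ ^ 2)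
      refine this.congr_deriv ?_
      ring
    exact (h1.sub h2).sub h3
  have hmono : ψ 1 ≤ ψ 0 := by
    have key : AntitoneOn ψ (Set.Icc 0 1) := by
      apply antitoneOn_of_deriv_nonpos (convex_Icc 0 1)
      · exact (Differentiable.continuous fun t => (hψ' t).differentiableAt).continuousOn
      · intro t ht
        exact ((hψ' t).differentiableAt).differentiableWithinAt
      · intro t ht
        rw [interior_Icc] at ht
        rw [(hψ' t).deriv]
        have hb : (inner ℝ (g (x + t • v)) v : ℝ) - inner ℝ (g x) v ≤ L * t * ‖v‖ ^ 2 := by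
          have h1 : (inner ℝ (g (x + t • v)) v : ℝ) - inner ℝ (g x) v
              = inner ℝ (g (x + t • v) - g x) v := by rw [inner_sub_left]
          rw [h1]
          calc (inner ℝ (g (x + t • v) - g x) v : ℝ) ≤ ‖g (x + t • v) - g x‖ * ‖v‖ :=
                real_inner_le_norm _ _
            _ ≤ (L * ‖(x + t • v) - x‖) * ‖v‖ := by
                gcongr; exact hLip _ _
            _ = L * t * ‖v‖ ^ 2 := by
                rw [add_sub_cancel_left, norm_smul, Real.norm_eq_abs,
                  abs_of_pos ht.1]
                ring
        linarith
    exact key (by norm_num) (by norm_num) (by norm_num)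
  have h0 : ψ 0 = f x := by simp [hψ]
  have h1 : ψ 1 = f y - inner ℝ (g x) v - L / 2 * ‖v‖ ^ 2 := by
    simp [hψ, hv]
  rw [h0, h1] at hmono
  linarith

/-- For gradient descent with inexact gradient of absolute error `Δ` on an
`L`-smooth function bounded below by `f*`, after `N` steps
`min_{0 ≤ k ≤ N-1} ‖∇f(x^k)‖ ≤ Δ + √(2L(f(x⁰) - f*)/N)`. -/
theorem inexact_gradient_descent_min_grad_norm {n : ℕ} (f : EuclideanSpace ℝ (Fin n) → ℝ)
    (g gt : EuclideanSpace ℝ (Fin n) → EuclideanSpace ℝ (Fin n)) (L Δ fstar : ℝ)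
    (hL : 0 < L) (hΔ : 0 ≤ Δ)
    (hgrad : ∀ x, HasGradientAt f (g x) x)
    (hLip : ∀ x y, ‖g x - g y‖ ≤ L * ‖x - y‖)
    (herr : ∀ x, ‖gt x - g x‖ ≤ Δ)
    (hlb : ∀ x, fstar ≤ f x)
    (x : ℕ → EuclideanSpace ℝ (Fin n))
    (hstep : ∀ k, x (k + 1) = x k - (1 / L) • gt (x k)) :
    ∀ N : ℕ, 0 < N → ∃ k < N,
      ‖g (x k)‖ ≤ Δ + Real.sqrt (2 * L * (f (x 0) - fstar) / N) := by
  intro N hN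
  have hLne : L ≠ 0 := ne_of_gt hL
  -- per-step inequality
  have step : ∀ k, ‖g (x k)‖ ^ 2 ≤ Δ ^ 2 + 2 * L * (f (x k) - f (x (k + 1))) := by
    intro k
    have hd := descent_lemma f g L hL hgrad hLip (x k) (x (k + 1))
    have hxy : x (k + 1) - x k = -((1 / L) • gt (x k)) := by
      rw [hstep k]; abel
    rw [hxy] at hd
    have hinner : (inner ℝ (g (x k)) (-((1 / L) • gt (x k))) : ℝ)
        = -(1 / L) * inner ℝ (g (x k)) (gt (x k)) := by
      rw [inner_neg_right, real_inner_smul_right]; ring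
    have hnorm : ‖-((1 / L) • gt (x k))‖ ^ 2 = (1 / L) ^ 2 * ‖gt (x k)‖ ^ 2 := by
      rw [norm_neg, norm_smul, mul_pow, Real.norm_eq_abs, sq_abs]
    rw [hinner, hnorm] at hd
    have hsq : ‖gt (x k) - g (x k)‖ ^ 2
        = ‖gt (x k)‖ ^ 2 - 2 * inner ℝ (gt (x k)) (g (x k)) + ‖g (x k)‖ ^ 2 :=
      norm_sub_sq_real _ _
    have herr2 : ‖gt (x k) - g (x k)‖ ^ 2 ≤ Δ ^ 2 := by
      have := herr (x k)
      nlinarith [norm_nonneg (gt (x k) - g (x k))]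
    have hcomm : (inner ℝ (g (x k)) (gt (x k)) : ℝ) = inner ℝ (gt (x k)) (g (x k)) :=
      real_inner_comm _ _
    have h2L : (0:ℝ) < 2 * L := by linarith
    have hmul := mul_le_mul_of_nonneg_left hd h2L.le
    have e1 : 2 * L * (f (x k) + -(1 / L) * (inner ℝ (g (x k)) (gt (x k)) : ℝ)
          + L / 2 * ((1 / L) ^ 2 * ‖gt (x k)‖ ^ 2))
        = 2 * L * f (x k) + ‖gt (x k)‖ ^ 2 - 2 * inner ℝ (g (x k)) (gt (x k)) := by
      field_simp
      ring
    linarith [hmul, e1, hsq, hcomm, herr2]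
  -- telescoping sum
  have hsum : ∀ M : ℕ, ∑ k ∈ Finset.range M, ‖g (x k)‖ ^ 2
      ≤ M * Δ ^ 2 + 2 * L * (f (x 0) - f (x M)) := by
    intro M
    induction M with
    | zero => simp
    | succ m ih =>
      rw [Finset.sum_range_succ]
      have := step m
      push_cast
      linarith
  have hSN : ∑ k ∈ Finset.range N, ‖g (x k)‖ ^ 2
      ≤ N * Δ ^ 2 + 2 * L * (f (x 0) - fstar) := by
    have h1 := hsum N
    have h2 : 0 ≤ L * (f (x N) - fstar) :=
      mul_nonneg hL.le (sub_nonneg.2 (hlb (x N)))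
    linarith
  -- pick the minimizer
  obtain ⟨k, hkmem, hkmin⟩ := Finset.exists_min_image (Finset.range N)
    (fun k => ‖g (x k)‖) ⟨0, Finset.mem_range.2 hN⟩
  refine ⟨k, Finset.mem_range.1 hkmem, ?_⟩
  have hbound : (N : ℝ) * ‖g (x k)‖ ^ 2 ≤ ∑ j ∈ Finset.range N, ‖g (x j)‖ ^ 2 := by
    calc (N : ℝ) * ‖g (x k)‖ ^ 2 = ∑ _j ∈ Finset.range N, ‖g (x k)‖ ^ 2 := by
          rw [Finset.sum_const, Finset.card_range, nsmul_eq_mul]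
      _ ≤ ∑ j ∈ Finset.range N, ‖g (x j)‖ ^ 2 := by
          apply Finset.sum_le_sum
          intro j hj
          exact pow_le_pow_left₀ (norm_nonneg _) (hkmin j hj) 2
  set c : ℝ := 2 * L * (f (x 0) - fstar) / N with hc
  have hNpos : (0 : ℝ) < N := by exact_mod_cast hN
  have hc0 : 0 ≤ c := by
    have hnum : 0 ≤ 2 * L * (f (x 0) - fstar) := by
      have := hlb (x 0); nlinarith
    exact div_nonneg hnum hNpos.le
  have hsq : ‖g (x k)‖ ^ 2 ≤ Δ ^ 2 + c := by
    have h1 : (N : ℝ) * ‖g (x k)‖ ^ 2 ≤ N * Δ ^ 2 + 2 * L * (f (x 0) - fstar) :=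
      le_trans hbound hSN
    have h2 : ‖g (x k)‖ ^ 2 ≤ (N * Δ ^ 2 + 2 * L * (f (x 0) - fstar)) / N := by
      rw [le_div_iff₀ hNpos]; linarith
    calc ‖g (x k)‖ ^ 2 ≤ (N * Δ ^ 2 + 2 * L * (f (x 0) - fstar)) / N := h2
      _ = Δ ^ 2 + c := by rw [hc]; field_simp
  have hsq2 : ‖g (x k)‖ ^ 2 ≤ (Δ + Real.sqrt c) ^ 2 := by
    have hmul := mul_nonneg hΔ (Real.sqrt_nonneg c)
    nlinarith [Real.sq_sqrt hc0, hsq]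
  have hfin := Real.sqrt_le_sqrt hsq2
  rwa [Real.sqrt_sq (norm_nonneg _), Real.sqrt_sq (by positivity)] at hfin
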